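/- arXiv:2302.02152 — 6 statements merged into one kernel-verified Lean document; each statement's English description precedes it below -/
import Mathlib

section
/- In a digraph D of order n whose only OLD set is the whole vertex set (i.e., γ_OL(D) = n), every vertex is either domination-forced or location-forced. -/
open scoped symmDiff

/-- The open in-neighbourhood of `v` in the digraph `D` (loops allowed). -/
def Nin {V : Type*} (D : V → V → Prop) (v : V) : Set V := {u | D u v}

/-- A digraph is locatable if every vertex has positive in-degree and
open in-neighbourhoods are pairwise distinct. -/
def Locatable {V : Type*} (D : V → V → Prop) : Prop :=
  (∀ v, (Nin D v).Nonempty) ∧ ∀ x y, Nin D x = Nin D y → x = y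

/-- `S` is an open neighbourhood locating-dominating set of `D`. -/
def IsOLD {V : Type*} (D : V → V → Prop) (S : Set V) : Prop :=
  (∀ v, ∃ u ∈ S, D u v) ∧ ∀ x y, x ≠ y → ∃ s ∈ S, s ∈ Nin D x ∆ Nin D y

/-- The OLD number `γ_OL(D)`: minimum size of an OLD set. -/
noncomputable def oldNum {V : Type*} (D : V → V → Prop) : ℕ :=
  sInf {k | ∃ S : Set V, IsOLD D S ∧ S.ncard = k}

/-- `v` is domination-forced: it is the unique in-neighbour of some vertex. -/
def DomForced {V : Type*} (D : V → V → Prop) (v : V) : Prop := ∃ w, Nin D w = {v}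

/-- `v` is location-forced: some pair of distinct vertices has
in-neighbourhood symmetric difference `{v}`. -/
def LocForced {V : Type*} (D : V → V → Prop) (v : V) : Prop :=
  ∃ x y, x ≠ y ∧ Nin D x ∆ Nin D y = {v}

/-- The arc `xy` is a forcing arc. -/
def ForcingArc {V : Type*} (D : V → V → Prop) (x y : V) : Prop :=
  Nin D y = {x} ∨ ∃ z, Nin D y ∆ Nin D z = {x} ∧ x ∈ Nin D y

/-- The underlying simple undirected graph of a digraph. -/
def underlying {V : Type*} (D : V → V → Prop) : SimpleGraph V where
  Adj x y := x ≠ y ∧ (D x y ∨ D y x)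
  symm := by constructor; intro x y h; exact ⟨h.1.symm, h.2.symm⟩
  loopless := by constructor; intro x h; exact h.1 rfl

theorem stmt_1 {V : Type*} [Fintype V] (D : V → V → Prop) (hloc : Locatable D)
    (hext : oldNum D = Fintype.card V) :
    ∀ v, DomForced D v ∨ LocForced D v := by
  intro v
  by_contra h
  push_neg at h
  obtain ⟨hd, hl⟩ := h
  have hS : IsOLD D (Set.univ \ {v}) := by
    constructor
    · intro w
      have hne : Nin D w ≠ {v} := fun hw => hd ⟨w, hw⟩
      obtain ⟨u, hu⟩ := hloc.1 w
      by_cases huv : ∃ u' ∈ Nin D w, u' ≠ v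
      · obtain ⟨u', hu', hu'v⟩ := huv
        exact ⟨u', ⟨trivial, hu'v⟩, hu'⟩
      · push_neg at huv
        exfalso
        apply hne
        apply Set.eq_singleton_iff_nonempty_unique_mem.2
        exact ⟨⟨u, hu⟩, huv⟩
    · intro x y hxy
      have hne : Nin D x ∆ Nin D y ≠ {v} := fun hw => hl ⟨x, y, hxy, hw⟩
      have hnemp : (Nin D x ∆ Nin D y).Nonempty := by
        rw [Set.nonempty_iff_ne_empty]
        intro he
        exact hxy (hloc.2 x y (symmDiff_eq_bot.1 he))
      by_cases hvv : ∃ s ∈ Nin D x ∆ Nin D y, s ≠ v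
      · obtain ⟨s, hs, hsv⟩ := hvv
        exact ⟨s, ⟨trivial, hsv⟩, hs⟩
      · push_neg at hvv
        exact absurd (Set.eq_singleton_iff_nonempty_unique_mem.2 ⟨hnemp, hvv⟩) hne
  have hcard : (Set.univ \ {v} : Set V).ncard = Fintype.card V - 1 := by
    rw [Set.ncard_diff_singleton_of_mem (Set.mem_univ v), Set.ncard_univ,
      Nat.card_eq_fintype_card]
  have hle : oldNum D ≤ Fintype.card V - 1 :=
    Nat.sInf_le ⟨Set.univ \ {v}, hS, hcard⟩
  have hpos : 0 < Fintype.card V := Fintype.card_pos_iff.2 ⟨v⟩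
  omega
end

section
/- Every locatable digraph D of order n has at most n−1 location-forced vertices. -/
open scoped symmDiff

theorem stmt_2 {V : Type*} [Fintype V] (D : V → V → Prop) (hloc : Locatable D) :
    {v | LocForced D v}.ncard ≤ Fintype.card V - 1 := by
  classical
  rcases isEmpty_or_nonempty V with hV | hV
  · simp [Set.eq_empty_of_isEmpty]
  obtain ⟨x0⟩ := hV
  -- Encode in-neighbourhoods as vectors over 𝔽₂.
  set S : V → (V → ZMod 2) := fun x u => if u ∈ Nin D x then 1 else 0 with hS
  -- Key: a symmetric difference {v} translates to S x - S y = single v 1.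
  have key : ∀ x y v : V, Nin D x ∆ Nin D y = {v} → S x - S y = Pi.single v 1 := by
    intro x y v h
    funext u
    have hu : (u ∈ Nin D x ∆ Nin D y) ↔ u = v := by rw [h]; exact Set.mem_singleton_iff
    rw [Set.mem_symmDiff] at hu
    simp only [Pi.sub_apply, hS, Pi.single_apply]
    by_cases huv : u = v
    · subst huv
      rcases hu.mpr rfl with ⟨h1, h2⟩ | ⟨h1, h2⟩ <;>
        rw [if_pos rfl] <;> [rw [if_pos h1, if_neg h2]; rw [if_neg h2, if_pos h1]] <;> decide
    · rw [if_neg huv]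
      by_cases hx : u ∈ Nin D x <;> by_cases hy : u ∈ Nin D y
      · simp [hx, hy]
      · exact absurd (hu.mp (Or.inl ⟨hx, hy⟩)) huv
      · exact absurd (hu.mp (Or.inr ⟨hy, hx⟩)) huv
      · simp [hx, hy]
  -- The span of the differences has dimension at most n - 1.
  set s : Finset (V → ZMod 2) := (Finset.univ.erase x0).image (fun x => S x - S x0) with hs
  set T : Submodule (ZMod 2) (V → ZMod 2) := Submodule.span (ZMod 2) (s : Set (V → ZMod 2))
    with hT
  have hd : ∀ x : V, S x - S x0 ∈ T := by
    intro x
    by_cases hx : x = x0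
    · subst hx; simp [T]
    · exact Submodule.subset_span (by
        simp only [hs, Finset.coe_image, Set.mem_image]
        exact ⟨x, by simp [hx], rfl⟩)
  have hmem : ∀ v : V, LocForced D v → (Pi.single v 1 : V → ZMod 2) ∈ T := by
    rintro v ⟨x, y, -, hxy⟩
    have : (Pi.single v 1 : V → ZMod 2) = (S x - S x0) - (S y - S x0) := by
      rw [← key x y v hxy]; ring
    rw [this]
    exact sub_mem (hd x) (hd y)
  -- The corresponding standard basis vectors are linearly independent in T.
  set g : {v // v ∈ {v | LocForced D v}} → T :=
    fun v => ⟨Pi.single v.1 1, hmem v.1 v.2⟩ with hg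
  have hind : LinearIndependent (ZMod 2) g := by
    apply LinearIndependent.of_comp T.subtype
    have : (T.subtype ∘ g) = (fun v : V => (Pi.single v 1 : V → ZMod 2)) ∘ Subtype.val := by
      funext v; rfl
    rw [this]
    have hb : LinearIndependent (ZMod 2) (fun v : V => (Pi.single v 1 : V → ZMod 2)) := by
      have := (Pi.basisFun (ZMod 2) V).linearIndependent
      have e : (fun v : V => (Pi.single v 1 : V → ZMod 2)) = ⇑(Pi.basisFun (ZMod 2) V) := by
        funext v; simp [Pi.basisFun_apply]
      rw [e]; exact this
    exact hb.comp Subtype.val Subtype.val_injective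
  have hcard : Fintype.card {v // v ∈ {v | LocForced D v}} ≤ Module.finrank (ZMod 2) T :=
    hind.fintype_card_le_finrank
  have hfr : Module.finrank (ZMod 2) T ≤ Fintype.card V - 1 := by
    calc Module.finrank (ZMod 2) T ≤ s.card := finrank_span_finset_le_card s
      _ ≤ (Finset.univ.erase x0).card := Finset.card_image_le
      _ = Fintype.card V - 1 := by simp [Finset.card_erase_of_mem]
  calc {v | LocForced D v}.ncard = Fintype.card {v // v ∈ {v | LocForced D v}} := by
        rw [Set.ncard_eq_toFinset_card']; simp [Set.toFinset_card, Fintype.card_subtype]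
    _ ≤ Fintype.card V - 1 := hcard.trans hfr
end

section
/- Bondy's theorem: Let V be a set with n elements and A₁,...,Aₙ be n pairwise distinct subsets of V. Then there exists a subset X of V of size n−1 such that the sets A₁ ∩ X, ..., Aₙ ∩ X are still pairwise distinct. -/
open scoped symmDiff

theorem stmt_3 {V : Type*} [Fintype V] (n : ℕ) (hn : Fintype.card V = n)
    (A : Fin n → Set V) (hA : Function.Injective A) :
    ∃ X : Set V, X.ncard = n - 1 ∧ Function.Injective (fun i => A i ∩ X) := by
  classical
  rcases Nat.eq_zero_or_pos n with rfl | hpos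
  · exact ⟨∅, by simp, fun i j _ => Subsingleton.elim i j⟩
  obtain ⟨m, rfl⟩ := Nat.exists_eq_succ_of_ne_zero hpos.ne'
  suffices h : ∃ x : V, Function.Injective (fun i => A i ∩ {x}ᶜ) by
    obtain ⟨x, hx⟩ := h
    refine ⟨{x}ᶜ, ?_, hx⟩
    have : ({x}ᶜ : Set V) = Set.univ \ {x} := by ext; simp
    rw [this, Set.ncard_diff_singleton_of_mem (Set.mem_univ x), Set.ncard_univ, Nat.card_eq_fintype_card, hn]
  by_contra hcon
  push_neg at hcon
  -- for every x, a bad pair with symmDiff {x}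
  have key : ∀ x : V, ∃ i j : Fin (m + 1), i ≠ j ∧ A i ∆ A j = {x} := by
    intro x
    obtain ⟨i, j, hij, hne⟩ := Function.not_injective_iff.1 (hcon x)
    refine ⟨i, j, hne, ?_⟩
    have hsub : A i ∆ A j ⊆ {x} := by
      intro v hv
      rw [Set.mem_symmDiff] at hv
      by_contra hvx
      have hvc : v ∈ ({x}ᶜ : Set V) := hvx
      have := Set.ext_iff.1 hij v
      simp only [Set.mem_inter_iff, hvc, and_true] at this
      rcases hv with ⟨h1, h2⟩ | ⟨h1, h2⟩
      · exact h2 (this.1 h1)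
      · exact h2 (this.2 h1)
    rcases Set.subset_singleton_iff_eq.1 hsub with hemp | hs
    · exact absurd (hA (symmDiff_eq_bot.1 hemp)) hne
    · exact hs
  -- indicator vectors over ZMod 2
  set ind : Set V → (V → ZMod 2) := fun s v => if v ∈ s then 1 else 0 with hind
  set f : Fin (m + 1) → (V → ZMod 2) := fun i => ind (A i) + ind (A 0) with hfdef
  set S : Submodule (ZMod 2) (V → ZMod 2) :=
    Submodule.span (ZMod 2) (Set.range (fun j : Fin m => f j.succ)) with hS
  have hf : ∀ i, f i ∈ S := by
    intro i
    rcases eq_or_ne i 0 with rfl | hi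
    · have : f 0 = 0 := by
        funext v
        have : ∀ a : ZMod 2, a + a = 0 := by decide
        simpa [hfdef] using this _
      rw [this]; exact S.zero_mem
    · exact Submodule.subset_span ⟨i.pred hi, by show f (i.pred hi).succ = f i; rw [Fin.succ_pred]⟩
  have hadd : ∀ (i j : Fin (m + 1)) (v : V), f i v + f j v = ind (A i) v + ind (A j) v := by
    intro i j v
    show (ind (A i) v + ind (A 0) v) + (ind (A j) v + ind (A 0) v) = _
    have h2 : ∀ a b c : ZMod 2, (a + c) + (b + c) = a + b := by decide
    exact h2 _ _ _
  have hsingle : ∀ x : V, Pi.single x 1 ∈ S := by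
    intro x
    obtain ⟨i, j, hij, hxij⟩ := key x
    have heq : Pi.single x 1 = f i + f j := by
      funext v
      have hv : v ∈ A i ∆ A j ↔ v = x := by rw [hxij]; simp
      rw [Set.mem_symmDiff] at hv
      rw [Pi.add_apply, hadd, Pi.single_apply]
      have e1 : ind (A i) v = if v ∈ A i then (1 : ZMod 2) else 0 := rfl
      have e2 : ind (A j) v = if v ∈ A j then (1 : ZMod 2) else 0 := rfl
      rw [e1, e2]
      by_cases hvx : v = x
      · rw [if_pos hvx]
        rcases hv.mpr hvx with ⟨h1, h2⟩ | ⟨h1, h2⟩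
        · rw [if_pos h1, if_neg h2]; decide
        · rw [if_neg h2, if_pos h1]; decide
      · rw [if_neg hvx]
        have hnot := fun h => hvx (hv.mp h)
        by_cases h1 : v ∈ A i <;> by_cases h2 : v ∈ A j
        · rw [if_pos h1, if_pos h2]; decide
        · exact absurd (Or.inl ⟨h1, h2⟩) hnot
        · exact absurd (Or.inr ⟨h2, h1⟩) hnot
        · rw [if_neg h1, if_neg h2]; decide
    rw [heq]; exact S.add_mem (hf i) (hf j)
  have htop : S = ⊤ := by
    rw [eq_top_iff, ← (Pi.basisFun (ZMod 2) V).span_eq, Submodule.span_le]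
    rintro v ⟨x, rfl⟩
    rw [Pi.basisFun_apply]
    exact hsingle x
  have := finrank_le_of_span_eq_top (htop ▸ hS.symm)
  rw [Module.finrank_fintype_fun_eq_card, hn, Fintype.card_fin] at this
  omega
end

section
/- Let D be a locatable digraph of order n with γ_OL(D) = n, and define H(D) on vertex set V(D) with an arc from x to y whenever there exists a location-forced vertex v of D with N⁻(x) = N⁻(y) \ {v} and v ∈ N⁻(y). Then H(D) is acyclic and every vertex of H(D) has in-degree at most 1 (so H(D) is a disjoint union of rooted directed trees). -/
open scoped symmDiff

open Classical in
private noncomputable def ind {V : Type*} (S : Set V) : V → ZMod 2 := fun a =>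
  if a ∈ S then 1 else 0

private lemma ind_empty {V : Type*} : ind (∅ : Set V) = 0 := by
  funext a; simp [ind]

private lemma aux_inj {V : Type*} [Fintype V] (N : V → Set V)
    (P Q : V → Set V) (q : V → V)
    (hQ : ∀ c, N (q c) = Q c)
    (hP : ∀ c, P c = ∅ ∨ ∃ u, N u = P c)
    (hcn : ∀ c, c ∉ P c)
    (hQP : ∀ c, Q c = P c ∪ {c}) :
    Function.Injective q := by
  classical
  set b : V → (V → ZMod 2) := fun u => ind (N u) with hb
  have hsingle : ∀ c : V, (Pi.single c (1 : ZMod 2) : V → ZMod 2) = b (q c) - ind (P c) := by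
    intro c
    have h1 : N (q c) = P c ∪ {c} := (hQ c).trans (hQP c)
    funext a
    simp only [Pi.single_apply, Pi.sub_apply, hb, ind, h1, Set.mem_union,
      Set.mem_singleton_iff]
    by_cases h : a = c
    · subst h; simp [hcn a]
    · simp [h]
  have hspan : ⊤ ≤ Submodule.span (ZMod 2) (Set.range b) := by
    rw [← (Pi.basisFun (ZMod 2) V).span_eq]
    refine Submodule.span_le.2 ?_
    rintro _ ⟨c, rfl⟩
    rw [Pi.basisFun_apply, hsingle c]
    refine sub_mem (Submodule.subset_span ⟨q c, rfl⟩) ?_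
    rcases hP c with h | ⟨u, hu⟩
    · rw [h, ind_empty]; exact zero_mem _
    · rw [← hu]; exact Submodule.subset_span ⟨u, rfl⟩
  have hcard : Fintype.card V = Module.finrank (ZMod 2) (V → ZMod 2) :=
    (Module.finrank_pi (ZMod 2)).symm
  let B := basisOfTopLeSpanOfCardEqFinrank b hspan hcard
  have hBcoe : ⇑B = b := coe_basisOfTopLeSpanOfCardEqFinrank b hspan hcard
  have key : ∀ u, (Finset.univ.filter (fun c => q c = u)).Nonempty := by
    intro u
    have hbu : b u = ∑ c ∈ Finset.univ.filter (fun c => c ∈ N u),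
        (Pi.single c (1 : ZMod 2) : V → ZMod 2) := by
      funext a
      rw [Finset.sum_apply]
      simp only [Pi.single_apply]
      rw [Finset.sum_ite_eq]
      simp [hb, ind]
    have h2 : (B.repr (b u)) u = 1 := by
      have hbB : b u = B u := (congrFun hBcoe u).symm
      rw [hbB, B.repr_self]
      simp
    have h3 : (B.repr (b u)) u = ∑ c ∈ Finset.univ.filter (fun c => c ∈ N u),
        (if q c = u then (1 : ZMod 2) else 0) := by
      rw [hbu, map_sum, Finsupp.finset_sum_apply]
      refine Finset.sum_congr rfl ?_
      intro c hc
      have hcN : c ∈ N u := by simpa using hc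
      rw [hsingle c, map_sub, Finsupp.sub_apply]
      have t1 : (B.repr (b (q c))) u = if q c = u then 1 else 0 := by
        have hbB : b (q c) = B (q c) := (congrFun hBcoe (q c)).symm
        rw [hbB, B.repr_self, Finsupp.single_apply]
      have t2 : (B.repr (ind (P c))) u = 0 := by
        rcases hP c with h | ⟨w, hw⟩
        · rw [h, ind_empty, map_zero]; simp
        · have hPb : ind (P c) = b w := by show ind (P c) = ind (N w); rw [hw]
          have hbB : b w = B w := (congrFun hBcoe w).symm
          rw [hPb, hbB, B.repr_self, Finsupp.single_apply]
          have hwu : w ≠ u := by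
            intro h
            subst h
            exact hcn c (hw ▸ hcN)
          simp [hwu]
      rw [t1, t2, sub_zero]
    have h5 : ∑ c ∈ Finset.univ.filter (fun c => c ∈ N u),
        (if q c = u then (1 : ZMod 2) else 0) = ∑ c ∈ Finset.univ,
        (if q c = u then (1 : ZMod 2) else 0) := by
      refine Finset.sum_subset (Finset.filter_subset _ _) ?_
      intro c _ hc
      have hqc : q c ≠ u := by
        intro h
        apply hc
        simp only [Finset.mem_filter, Finset.mem_univ, true_and]
        have hcq : c ∈ N (q c) := by
          rw [hQ c, hQP c]; exact Set.mem_union_right _ rfl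
        rwa [h] at hcq
      simp [hqc]
    have h4 : (1 : ZMod 2) = ∑ c ∈ Finset.univ,
        (if q c = u then (1 : ZMod 2) else 0) := by
      rw [← h5, ← h3, h2]
    rw [Finset.sum_boole] at h4
    by_contra hempty
    rw [Finset.not_nonempty_iff_eq_empty] at hempty
    rw [hempty] at h4
    simp at h4
  have hsurj : Function.Surjective q := by
    intro u
    obtain ⟨c, hc⟩ := key u
    exact ⟨c, (Finset.mem_filter.1 hc).2⟩
  exact Finite.injective_iff_surjective.2 hsurj

private lemma symm_single {V : Type*} {A B : Set V} {c : V}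
    (h : A ∆ B = {c}) (hc : c ∈ A) : c ∉ B ∧ A = B ∪ {c} := by
  have hcm : c ∈ A ∆ B := by rw [h]; rfl
  have hcB : c ∉ B := by
    rcases Set.mem_symmDiff.1 hcm with ⟨_, h2⟩ | ⟨_, h2⟩
    · exact h2
    · exact absurd hc h2
  refine ⟨hcB, ?_⟩
  ext a
  by_cases hac : a = c
  · subst hac; simp [hc]
  · have hnm : a ∉ A ∆ B := by rw [h]; simp [hac]
    rw [Set.mem_symmDiff] at hnm
    push_neg at hnm
    simp only [Set.mem_union, Set.mem_singleton_iff, hac, or_false]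
    constructor
    · intro ha; exact hnm.1 ha
    · intro hb; exact hnm.2 hb

private lemma forced_of_ext {V : Type*} [Fintype V] (D : V → V → Prop)
    (hloc : Locatable D) (hext : oldNum D = Fintype.card V) (c : V) :
    ∃ A B : Set V, (A = ∅ ∨ ∃ u, Nin D u = A) ∧ (B = ∅ ∨ ∃ u, Nin D u = B) ∧
      A ∆ B = {c} := by
  by_contra h
  push_neg at h
  have hOLD : IsOLD D {c}ᶜ := by
    constructor
    · intro w
      by_cases hex : ∃ u, u ∈ Nin D w ∧ u ≠ c
      · obtain ⟨u, hu, huc⟩ := hex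
        exact ⟨u, by simp [huc], hu⟩
      · push_neg at hex
        obtain ⟨u, hu⟩ := hloc.1 w
        have hcmem : c ∈ Nin D w := (hex u hu) ▸ hu
        have hNw : Nin D w = {c} :=
          Set.eq_singleton_iff_unique_mem.2 ⟨hcmem, hex⟩
        have hsd : Nin D w ∆ (∅ : Set V) = {c} := by
          rw [Set.symmDiff_def]; simp [hNw]
        exact absurd hsd (h _ _ (Or.inr ⟨w, rfl⟩) (Or.inl rfl))
    · intro x y hxy
      have hne : Nin D x ≠ Nin D y := fun hh => hxy (hloc.2 x y hh)
      have hsd : (Nin D x ∆ Nin D y).Nonempty := by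
        rw [Set.nonempty_iff_ne_empty]
        intro hh
        exact hne (symmDiff_eq_bot.1 hh)
      by_cases hsub : Nin D x ∆ Nin D y ⊆ {c}
      · exfalso
        rcases Set.subset_singleton_iff_eq.1 hsub with hh | hh
        · exact hsd.ne_empty hh
        · exact h _ _ (Or.inr ⟨x, rfl⟩) (Or.inr ⟨y, rfl⟩) hh
      · obtain ⟨s, hs, hsc⟩ := Set.not_subset.1 hsub
        exact ⟨s, hsc, hs⟩
  have h1 : 1 ≤ Fintype.card V := Fintype.card_pos_iff.2 ⟨c⟩
  have hcard : ({c}ᶜ : Set V).ncard = Fintype.card V - 1 := by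
    have := Set.ncard_add_ncard_compl ({c} : Set V)
    rw [Set.ncard_singleton] at this
    rw [Nat.card_eq_fintype_card] at this
    omega
  have hle : oldNum D ≤ Fintype.card V - 1 := Nat.sInf_le ⟨{c}ᶜ, hOLD, hcard⟩
  omega

theorem stmt_8 {V : Type*} [Fintype V] (D : V → V → Prop) (hloc : Locatable D)
    (hext : oldNum D = Fintype.card V) (H : V → V → Prop)
    (hH : ∀ x y, H x y ↔ ∃ v, LocForced D v ∧ v ∈ Nin D y ∧ Nin D x = Nin D y \ {v}) :
    (∀ x, ¬ Relation.TransGen H x x) ∧ ∀ x x' y, H x y → H x' y → x = x' := by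
  classical
  have hinj : Function.Injective (Nin D) := fun a b hh => hloc.2 a b hh
  have hstep : ∀ a b, H a b → (Nin D a).ncard < (Nin D b).ncard := by
    intro a b hab
    obtain ⟨v, -, hv, hx⟩ := (hH a b).1 hab
    apply Set.ncard_lt_ncard _ (Set.toFinite _)
    rw [hx]
    exact ⟨Set.diff_subset, fun hh => (hh hv).2 rfl⟩
  constructor
  · intro x hx
    have hlt : ∀ a b, Relation.TransGen H a b →
        (Nin D a).ncard < (Nin D b).ncard := by
      intro a b hab
      induction hab with
      | single h => exact hstep _ _ h
      | tail _ h ih => exact ih.trans (hstep _ _ h)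
    exact lt_irrefl _ (hlt x x hx)
  · intro x x' y hxy hx'y
    obtain ⟨v, -, hvmem, hvx⟩ := (hH x y).1 hxy
    obtain ⟨v', -, hv'mem, hv'x⟩ := (hH x' y).1 hx'y
    have hvv' : v = v' := by
      by_contra hne
      choose A B hA hB hAB using forced_of_ext D hloc hext
      have hcAB : ∀ c, c ∈ A c ∨ c ∈ B c := by
        intro c
        have : c ∈ A c ∆ B c := by rw [hAB c]; rfl
        rcases Set.mem_symmDiff.1 this with ⟨h1, -⟩ | ⟨h1, -⟩
        · exact Or.inl h1
        · exact Or.inr h1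
      set Q : V → Set V := fun c =>
        if c = v ∨ c = v' then Nin D y else if c ∈ A c then A c else B c with hQdef
      set P : V → Set V := fun c =>
        if c = v then Nin D x else if c = v' then Nin D x'
          else if c ∈ A c then B c else A c with hPdef
      have hQmem : ∀ c, ∃ u, Nin D u = Q c := by
        intro c
        by_cases hcv : c = v ∨ c = v'
        · exact ⟨y, by simp [hQdef, hcv]⟩
        · by_cases hcA : c ∈ A c
          · rcases hA c with hempty | ⟨u, hu⟩
            · exact absurd (hempty ▸ hcA) (Set.notMem_empty c)
            · exact ⟨u, by simpa [hQdef, hcv, hcA] using hu⟩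
          · have hcB : c ∈ B c := (hcAB c).resolve_left hcA
            rcases hB c with hempty | ⟨u, hu⟩
            · exact absurd (hempty ▸ hcB) (Set.notMem_empty c)
            · exact ⟨u, by simpa [hQdef, hcv, hcA] using hu⟩
      choose q hq using hQmem
      have hP' : ∀ c, P c = ∅ ∨ ∃ u, Nin D u = P c := by
        intro c
        by_cases hcv : c = v
        · exact Or.inr ⟨x, by simp [hPdef, hcv]⟩
        · by_cases hcv' : c = v'
          · exact Or.inr ⟨x', by subst hcv'; simp [hPdef, hcv]⟩
          · by_cases hcA : c ∈ A c
            · simpa [hPdef, hcv, hcv', hcA] using hB c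
            · simpa [hPdef, hcv, hcv', hcA] using hA c
      have hcn : ∀ c, c ∉ P c := by
        intro c
        by_cases hcv : c = v
        · subst hcv
          simp only [hPdef, if_pos rfl]
          rw [hvx]
          simp
        · by_cases hcv' : c = v'
          · subst hcv'
            simp only [hPdef, if_neg hcv, if_pos rfl]
            rw [hv'x]
            simp
          · by_cases hcA : c ∈ A c
            · simp only [hPdef, if_neg hcv, if_neg hcv', if_pos hcA]
              exact (symm_single (hAB c) hcA).1
            · simp only [hPdef, if_neg hcv, if_neg hcv', if_neg hcA]
              exact hcA
      have hQP : ∀ c, Q c = P c ∪ {c} := by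
        intro c
        by_cases hcv : c = v
        · subst hcv
          have hq2 : Q c = Nin D y := by simp [hQdef]
          have hp2 : P c = Nin D x := by simp [hPdef]
          rw [hq2, hp2, hvx, Set.diff_union_of_subset (by simpa using hvmem)]
        · by_cases hcv' : c = v'
          · subst hcv'
            have hq2 : Q c = Nin D y := by simp [hQdef]
            have hp2 : P c = Nin D x' := by simp [hPdef, hcv]
            rw [hq2, hp2, hv'x, Set.diff_union_of_subset (by simpa using hv'mem)]
          · by_cases hcA : c ∈ A c
            · have hq2 : Q c = A c := by simp [hQdef, hcv, hcv', hcA]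
              have hp2 : P c = B c := by simp [hPdef, hcv, hcv', hcA]
              rw [hq2, hp2]
              exact (symm_single (hAB c) hcA).2
            · have hcB : c ∈ B c := (hcAB c).resolve_left hcA
              have hq2 : Q c = B c := by simp [hQdef, hcv, hcv', hcA]
              have hp2 : P c = A c := by simp [hPdef, hcv, hcv', hcA]
              rw [hq2, hp2]
              have hBA : B c ∆ A c = {c} := by rw [symmDiff_comm]; exact hAB c
              exact (symm_single hBA hcB).2
      have hqinj : Function.Injective q := aux_inj (Nin D) P Q q hq hP' hcn hQP
      have hqv : q v = y := by
        apply hinj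
        rw [hq v]
        simp [hQdef]
      have hqv' : q v' = y := by
        apply hinj
        rw [hq v']
        simp [hQdef]
      exact hne (hqinj (hqv.trans hqv'.symm))
    apply hinj
    rw [hvx, hv'x, hvv']
end

section
/- For a connected, symmetric, reflexive, locatable digraph D of order n, γ_OL(D) = n if and only if n = 1. -/
open scoped symmDiff

open Matrix in
/-- Key lemma: over a finite nonempty vertex set, not every vertex can be
location-forced.  Proof: otherwise, with indicator matrix `A` of `D` over
`GF(2)` and a matrix `B` each of whose columns has exactly two ones
(at the forcing pair), `A * B = 1`; but the all-ones row vector is killed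
by `B`, contradicting invertibility. -/
lemma exists_not_locForced {V : Type*} [Fintype V] [Nonempty V] (D : V → V → Prop) :
    ∃ v : V, ∀ x y : V, x ≠ y → Nin D x ∆ Nin D y ≠ {v} := by
  classical
  by_contra hcon
  push_neg at hcon
  choose x y hxy hs using hcon
  set A : Matrix V V (ZMod 2) := fun w u => if D w u then 1 else 0 with hA
  set B : Matrix V V (ZMod 2) :=
    fun u v => (if u = x v then 1 else 0) + (if u = y v then 1 else 0) with hB
  have key : ∀ w v : V, A w (x v) + A w (y v) = if w = v then 1 else 0 := by
    intro w v
    have hmem : (D w (x v) ∧ ¬ D w (y v)) ∨ (D w (y v) ∧ ¬ D w (x v)) ↔ w = v := by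
      have h := Set.ext_iff.mp (hs v) w
      simpa only [Set.mem_symmDiff, Nin, Set.mem_setOf_eq, Set.mem_singleton_iff] using h
    by_cases h1 : D w (x v) <;> by_cases h2 : D w (y v)
    · simp only [h1, h2, not_true, and_false, false_and, or_self, false_iff] at hmem
      simp only [hA, h1, h2, if_true, if_neg hmem]
      decide
    · have heq : w = v := hmem.mp (Or.inl ⟨h1, h2⟩)
      subst heq
      simp [hA, h1, h2]
    · have heq : w = v := hmem.mp (Or.inr ⟨h2, h1⟩)
      subst heq
      simp [hA, h1, h2]
    · simp only [h1, h2, not_false_iff, and_true, false_and, and_false, or_self,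
        false_iff] at hmem
      simp [hA, h1, h2, hmem]
  have hAB : A * B = 1 := by
    ext w v
    rw [Matrix.mul_apply, Matrix.one_apply]
    have hterm : ∀ u : V, A w u * B u v
        = (if u = x v then A w u else 0) + (if u = y v then A w u else 0) := by
      intro u
      simp only [hB, mul_add, mul_ite, mul_one, mul_zero]
    rw [Finset.sum_congr rfl fun u _ => hterm u, Finset.sum_add_distrib,
      Finset.sum_ite_eq' Finset.univ (x v) (fun u => A w u),
      Finset.sum_ite_eq' Finset.univ (y v) (fun u => A w u)]
    simpa using key w v
  have hBA : B * A = 1 := mul_eq_one_comm.mp hAB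
  have hcol : (fun _ : V => (1 : ZMod 2)) ᵥ* B = 0 := by
    funext v
    have h0 : ((fun _ : V => (1 : ZMod 2)) ᵥ* B) v = ∑ u : V, B u v := by
      simp [Matrix.vecMul, dotProduct]
    rw [h0]
    simp only [hB]
    rw [Finset.sum_add_distrib,
      Finset.sum_ite_eq' Finset.univ (x v) (fun _ => (1 : ZMod 2)),
      Finset.sum_ite_eq' Finset.univ (y v) (fun _ => (1 : ZMod 2))]
    simp only [Finset.mem_univ, if_true, Pi.zero_apply]
    decide
  have hmain : (fun _ : V => (1 : ZMod 2)) ᵥ* B ᵥ* A = fun _ : V => (1 : ZMod 2) := by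
    rw [Matrix.vecMul_vecMul, hBA, Matrix.vecMul_one]
  rw [hcol, Matrix.zero_vecMul] at hmain
  have hbad := congrFun hmain (Classical.arbitrary V)
  simp at hbad

theorem stmt_9 {V : Type*} [Fintype V] (D : V → V → Prop)
    (hconn : (underlying D).Connected)
    (hsym : ∀ x y, D x y → D y x) (hrefl : ∀ v, D v v) (hloc : Locatable D) :
    oldNum D = Fintype.card V ↔ Fintype.card V = 1 := by
  classical
  have hne : Nonempty V := hconn.nonempty
  have hpos : 0 < Fintype.card V := Fintype.card_pos
  constructor
  · intro hold
    by_contra hcard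
    have h2 : 2 ≤ Fintype.card V := by omega
    obtain ⟨v, hv⟩ := exists_not_locForced D
    -- every vertex has an in-neighbour distinct from itself
    have hadj : ∀ w : V, ∃ b, b ≠ w ∧ D b w := by
      intro w
      obtain ⟨u, hu⟩ := Fintype.exists_ne_of_one_lt_card h2 w
      obtain ⟨p⟩ := hconn.preconnected w u
      cases p with
      | nil => exact absurd rfl hu
      | @cons _ b _ h q =>
        refine ⟨b, Ne.symm h.1, ?_⟩
        rcases h.2 with h' | h'
        · exact hsym _ _ h'
        · exact h'
    have hOLD : IsOLD D (Set.univ \ {v}) := by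
      constructor
      · intro w
        by_cases hwv : w = v
        · obtain ⟨b, hbw, hDb⟩ := hadj w
          refine ⟨b, ⟨Set.mem_univ b, ?_⟩, hDb⟩
          simp [hwv ▸ hbw]
        · exact ⟨w, ⟨Set.mem_univ w, by simp [hwv]⟩, hrefl w⟩
      · intro a b hab
        have hnonempty : (Nin D a ∆ Nin D b).Nonempty := by
          rw [Set.nonempty_iff_ne_empty]
          intro hempty
          exact hab (hloc.2 a b (by
            have := symmDiff_eq_bot.mp (by exact hempty)
            exact this))
        by_contra hno
        push_neg at hno
        have hsub : Nin D a ∆ Nin D b = {v} := by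
          rw [Set.eq_singleton_iff_nonempty_unique_mem]
          refine ⟨hnonempty, fun s hsmem => ?_⟩
          by_contra hsv
          exact hno s ⟨Set.mem_univ s, by simp [hsv]⟩ hsmem
        exact hv a b hab hsub
    have hcount : (Set.univ \ {v} : Set V).ncard = Fintype.card V - 1 := by
      rw [Set.ncard_diff_singleton_of_mem (Set.mem_univ v), Set.ncard_univ,
        Nat.card_eq_fintype_card]
    have hle : oldNum D ≤ Fintype.card V - 1 :=
      Nat.sInf_le ⟨Set.univ \ {v}, hOLD, hcount⟩
    omega
  · intro h1
    have hsub : Subsingleton V := Fintype.card_le_one_iff_subsingleton.mp (le_of_eq h1)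
    have huniv : IsOLD D (Set.univ : Set V) :=
      ⟨fun v => ⟨v, Set.mem_univ v, hrefl v⟩,
       fun a b hab => absurd (Subsingleton.elim a b) hab⟩
    have hmem : 1 ∈ {k | ∃ S : Set V, IsOLD D S ∧ S.ncard = k} :=
      ⟨Set.univ, huniv, by rw [Set.ncard_univ, Nat.card_eq_fintype_card, h1]⟩
    have hle : oldNum D ≤ 1 := Nat.sInf_le hmem
    have hne0 : oldNum D ≠ 0 := by
      intro h0
      have h0mem : 0 ∈ {k | ∃ S : Set V, IsOLD D S ∧ S.ncard = k} := by
        rw [← h0]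
        exact Nat.sInf_mem ⟨1, hmem⟩
      obtain ⟨S, hS, hS0⟩ := h0mem
      have hSempty : S = ∅ := (Set.ncard_eq_zero (Set.toFinite S)).mp hS0
      obtain ⟨w⟩ := hne
      obtain ⟨u, hu, -⟩ := hS.1 w
      rw [hSempty] at hu
      exact hu
    omega
end

section
/- Let D be a connected, symmetric, loop-free, locatable digraph with γ_OL(D) = |V(D)|. Then every directed cycle formed by the forcing arcs of D has length exactly 2. -/
open scoped symmDiff

lemma aux_symmDiff_single {V : Type*} {A B : Set V} {x : V}
    (h : A ∆ B = {x}) (hx : x ∈ A) : B = A \ {x} := by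
  have key : ∀ w, ((w ∈ A ∧ w ∉ B) ∨ (w ∈ B ∧ w ∉ A)) ↔ w = x := by
    intro w; rw [← Set.mem_symmDiff, h]; simp
  ext w
  simp only [Set.mem_diff, Set.mem_singleton_iff]
  by_cases hwx : w = x
  · subst hwx; have := (key w).mpr rfl; tauto
  · have := key w; tauto

theorem stmt_12 {V : Type*} [Fintype V] (D : V → V → Prop)
    (hconn : (underlying D).Connected) (hsym : ∀ x y, D x y → D y x)
    (hloopfree : ∀ v, ¬ D v v) (hloc : Locatable D)
    (hext : oldNum D = Fintype.card V) :
    ∀ n : ℕ, 0 < n → ∀ f : ZMod n → V, Function.Injective f →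
      (∀ i, ForcingArc D (f i) (f (i + 1))) → n = 2 := by
  intro n hn
  have mem_sym : ∀ a b : V, a ∈ Nin D b → b ∈ Nin D a := fun a b h => hsym a b h
  rcases n with _ | _ | _ | k
  · omega
  · -- n = 1
    intro f hf harc
    exfalso
    have h := harc 0
    have h01 : ((0 : ZMod 1) + 1) = 0 := by decide
    rw [h01] at h
    rcases h with h | ⟨z, hz, hx⟩
    · have : f 0 ∈ Nin D (f 0) := by rw [h]; exact Set.mem_singleton _
      exact hloopfree (f 0) this
    · exact hloopfree (f 0) hx
  · intro _ _ _; rfl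
  · -- n = k + 3
    intro f hf harc
    exfalso
    have hval : ∀ a : ℕ, a < k + 3 → ((a : ZMod (k + 3)).val = a) :=
      fun a ha => ZMod.val_cast_of_lt ha
    have h02 : (0 : ZMod (k + 3)) ≠ 2 := by
      intro h
      have h0 := hval 0 (by omega)
      have h2 := hval 2 (by omega)
      push_cast at h0 h2
      rw [h] at h0
      omega
    have a01 := harc 0
    have a12 := harc 1
    rw [zero_add] at a01
    rw [one_add_one_eq_two] at a12
    have hne02 : f 0 ≠ f 2 := fun h => h02 (hf h)
    have hx12 : f 1 ∈ Nin D (f 2) := by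
      rcases a12 with h | ⟨z, _, hx⟩
      · rw [h]; exact Set.mem_singleton _
      · exact hx
    have hx21 : f 2 ∈ Nin D (f 1) := mem_sym _ _ hx12
    rcases a01 with h | ⟨z0, hz0, hx01⟩
    · rw [h] at hx21
      exact hne02 hx21.symm
    · have hz0eq : Nin D z0 = Nin D (f 1) \ {f 0} := aux_symmDiff_single hz0 hx01
      have hx2z0 : f 2 ∈ Nin D z0 := by
        rw [hz0eq]; exact ⟨hx21, fun h => hne02 (Set.mem_singleton_iff.mp h).symm⟩
      have hz0x2 : z0 ∈ Nin D (f 2) := mem_sym _ _ hx2z0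
      have hz0ne1 : z0 ≠ f 1 := by
        intro h
        rw [h] at hz0eq
        have := hz0eq ▸ hx01
        exact this.2 rfl
      rcases a12 with h | ⟨z1, hz1, hx12'⟩
      · rw [h] at hz0x2
        exact hz0ne1 hz0x2
      · have hz1eq : Nin D z1 = Nin D (f 2) \ {f 1} := aux_symmDiff_single hz1 hx12'
        have hz0z1 : z0 ∈ Nin D z1 := by rw [hz1eq]; exact ⟨hz0x2, hz0ne1⟩
        have hz1z0 : z1 ∈ Nin D z0 := mem_sym _ _ hz0z1
        rw [hz0eq] at hz1z0
        have hx1z1 : f 1 ∈ Nin D z1 := mem_sym _ _ hz1z0.1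
        rw [hz1eq] at hx1z1
        exact hx1z1.2 rfl
end
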